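/- Let k ≥ 2 and q ≥ 2, and let p be a k-homogeneous polynomial in n complex variables with associated symmetric k-linear form L. Assume ‖L‖ on (ℓ₂ⁿ)^k equals B₂ and ‖L‖ on (ℓ_∞ⁿ)^k equals B_∞. Then the supremum of |p| on the ℓ_q unit ball satisfies ‖p‖_{P(^k ℓ_qⁿ)} ≤ B₂^{2/q} · B_∞^{(q−2)/q}. -/

import Mathlib

open Complex HadamardThreeLines


/-- Complex interpolation step: let `k ≥ 2`, `q ≥ 2`, and let `p` be a `k`-homogeneous
polynomial in `n` complex variables with associated symmetric `k`-linear form `L`,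
`p(z) = L(z,...,z)`.  If `‖L‖` on `(ℓ₂ⁿ)^k` equals `B₂` and `‖L‖` on `(ℓ∞ⁿ)^k` equals
`B∞`, then the supremum of `|p|` on the `ℓ_q` unit ball satisfies
`‖p‖_{P(^k ℓ_qⁿ)} ≤ B₂^{2/q} B∞^{(q−2)/q}`. -/
theorem interpolation_polynomial_bound (n k : ℕ) (hk : 2 ≤ k) (q : ℝ) (hq : 2 ≤ q)
    (L : MultilinearMap ℂ (fun _ : Fin k => Fin n → ℂ) ℂ)
    (hsym : ∀ (σ : Equiv.Perm (Fin k)) (v : Fin k → Fin n → ℂ), L (v ∘ σ) = L v)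
    (B2 Binf : ℝ)
    (hB2 : IsLUB {r : ℝ | ∃ v : Fin k → Fin n → ℂ,
      (∀ j, ∑ i, ‖v j i‖ ^ 2 ≤ 1) ∧ r = ‖L v‖} B2)
    (hBinf : IsLUB {r : ℝ | ∃ v : Fin k → Fin n → ℂ,
      (∀ j, ∀ i, ‖v j i‖ ≤ 1) ∧ r = ‖L v‖} Binf)
    (z : Fin n → ℂ) (hz : ∑ i, ‖z i‖ ^ q ≤ 1) :
    ‖L (fun _ => z)‖ ≤ B2 ^ (2 / q) * Binf ^ ((q - 2) / q) := by
  classical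
  have hq0 : (0:ℝ) < q := by linarith
  have hqne : (q:ℝ) ≠ 0 := ne_of_gt hq0
  have hzle : ∀ i, ‖z i‖ ≤ 1 := by
    intro i
    by_contra h
    push_neg at h
    have h1 : (1:ℝ) < ‖z i‖ ^ q :=
      (Real.one_lt_rpow_iff_of_pos (by positivity)).2 (Or.inl ⟨h, hq0⟩)
    have h2 : ‖z i‖ ^ q ≤ ∑ j, ‖z j‖ ^ q :=
      Finset.single_le_sum (f := fun j => ‖z j‖ ^ q) (fun j _ => by positivity)
        (Finset.mem_univ i)
    linarith
  set entry : Fin n → ℂ → ℂ := fun i s =>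
    if z i = 0 then 0 else (z i / ‖z i‖) * ((‖z i‖ : ℂ) ^ ((q : ℂ) * s / 2)) with hentry
  set f : ℂ → ℂ := fun s => L (fun _ => fun i => entry i s) with hf
  have hre : ∀ s : ℂ, ((q:ℂ) * s / 2).re = q * s.re / 2 := by
    intro s
    have h : (q:ℂ) * s / 2 = ((q/2 : ℝ):ℂ) * s := by push_cast; ring
    rw [h, Complex.re_ofReal_mul]; ring
  have hmod : ∀ i (s : ℂ), z i ≠ 0 → ‖entry i s‖ = ‖z i‖ ^ (q * s.re / 2) := by
    intro i s hne
    have hpos : (0:ℝ) < ‖z i‖ := norm_pos_iff.2 hne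
    have h1 : ‖(z i / (‖z i‖:ℂ))‖ = 1 := by
      rw [norm_div, Complex.norm_real, norm_norm, div_self (norm_ne_zero_iff.2 hne)]
    have h2 : ‖((‖z i‖:ℂ) ^ ((q:ℂ) * s / 2))‖ = ‖z i‖ ^ (q * s.re / 2) := by
      rw [Complex.norm_cpow_eq_rpow_re_of_pos hpos, hre]
    simp only [hentry, if_neg hne, norm_mul, h1, h2, one_mul]
  have hmodle1 : ∀ i (s : ℂ), 0 ≤ s.re → ‖entry i s‖ ≤ 1 := by
    intro i s hs
    by_cases hne : z i = 0
    · simp [hentry, hne]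
    · rw [hmod i s hne]
      exact Real.rpow_le_one (norm_nonneg _) (hzle i)
        (div_nonneg (mul_nonneg hq0.le hs) (by norm_num))
  have hstrip : ∀ s : ℂ, 0 ≤ s.re → ‖f s‖ ≤ Binf := fun s hs =>
    hBinf.1 ⟨fun _ => fun i => entry i s, fun _ i => hmodle1 i s hs, rfl⟩
  have hline1 : ∀ s : ℂ, s.re = 1 → ‖f s‖ ≤ B2 := by
    intro s hs
    refine hB2.1 ⟨fun _ => fun i => entry i s, fun j => ?_, rfl⟩
    refine le_trans (Finset.sum_le_sum fun i _ => ?_) hz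
    by_cases hne : z i = 0
    · have : ‖z i‖ = 0 := norm_eq_zero.2 hne
      simp [hentry, hne, this, Real.zero_rpow hqne]
    · rw [hmod i s hne, hs]
      rw [← Real.rpow_natCast (‖z i‖ ^ (q * 1 / 2)) 2,
        ← Real.rpow_mul (norm_nonneg _)]
      apply le_of_eq
      congr 1
      push_cast
      ring
  have hde : ∀ i, Differentiable ℂ (entry i) := by
    intro i
    by_cases hne : z i = 0
    · have : entry i = fun _ => 0 := by funext s; simp [hentry, hne]
      rw [this]; exact differentiable_const 0
    · have hrw : entry i = fun s => (z i / ‖z i‖) * ((‖z i‖:ℂ) ^ ((q:ℂ) * s / 2)) := by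
        funext s; simp [hentry, hne]
      rw [hrw]
      apply Differentiable.const_mul
      apply Differentiable.const_cpow
      · exact ((differentiable_const _).mul differentiable_id).div_const 2
      · exact Or.inl (Complex.ofReal_ne_zero.2 (norm_ne_zero_iff.2 hne))
  have hdiff : Differentiable ℂ f := by
    have hrep : f = fun s => ∑ r : Fin k → Fin n,
        (∏ j, entry (r j) s) * L (fun j => Pi.single (r j) (1:ℂ)) := by
      funext s
      show L (fun _ : Fin k => fun i => entry i s) = _
      have hv : (fun _ : Fin k => fun i => entry i s) =
          fun _ : Fin k => ∑ i : Fin n, entry i s • (Pi.single i (1:ℂ) : Fin n → ℂ) := by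
        funext j x
        simp [Finset.sum_apply, Pi.single_apply, eq_comm]
      rw [hv, L.map_sum]
      refine Finset.sum_congr rfl fun r _ => ?_
      rw [L.map_smul_univ]
      simp [smul_eq_mul]
    rw [hrep]
    apply Differentiable.fun_sum
    intro r _
    exact (Differentiable.fun_finset_prod fun j _ => hde (r j)).mul_const _
  set θ : ℂ := ((2/q : ℝ) : ℂ) with hθ
  have hθre : θ.re = 2/q := Complex.ofReal_re _
  have hmem : θ ∈ verticalClosedStrip 0 1 := by
    constructor
    · rw [hθre]; positivity
    · rw [hθre]; exact (div_le_one hq0).2 hq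
  have hbdd : BddAbove ((norm ∘ f) '' (verticalClosedStrip 0 1)) := by
    refine ⟨Binf, ?_⟩
    rintro y ⟨w, hw, rfl⟩
    exact hstrip w hw.1
  have key := norm_le_interp_of_mem_verticalClosedStrip₀₁' f hmem hdiff.diffContOnCl hbdd
    (fun w hw => hstrip w (le_of_eq (Set.mem_singleton_iff.1 hw).symm))
    (fun w hw => hline1 w (Set.mem_singleton_iff.1 hw))
  have hfθ : f θ = L (fun _ => z) := by
    have hcol : (fun i => entry i θ) = z := by
      funext i
      by_cases hne : z i = 0
      · simp [hentry, hne]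
      · have hexp1 : (q:ℂ) * θ / 2 = 1 := by
          have hqC : (q:ℂ) ≠ 0 := Complex.ofReal_ne_zero.2 hqne
          rw [hθ]
          push_cast
          field_simp
        simp only [hentry, if_neg hne, hexp1, Complex.cpow_one]
        exact div_mul_cancel₀ _ (Complex.ofReal_ne_zero.2 (norm_ne_zero_iff.2 hne))
    show L (fun _ => fun i => entry i θ) = L fun _ => z
    exact congrArg L (funext fun _ => hcol)
  calc ‖L (fun _ => z)‖ = ‖f θ‖ := by rw [hfθ]
    _ ≤ Binf ^ (1 - θ.re) * B2 ^ θ.re := key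
    _ = B2 ^ (2/q) * Binf ^ ((q-2)/q) := by
        rw [hθre]
        have h12 : 1 - 2/q = (q-2)/q := by field_simp
        rw [h12, mul_comm]
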